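/- Let X, Y be locally convex Hausdorff TVS and K ⊂ Y a closed pointed convex cone with nonempty interior. If F : X → Y ∪ {+∞_Y} is a proper mapping, then epi_K F* is a closed subset of L(X,Y) × Y, where L(X,Y) carries the topology of pointwise convergence. -/

import Mathlib

open Set Pointwise Topology

def wSupElems {Y : Type*} [AddCommGroup Y] [TopologicalSpace Y] (K M : Set Y) : Set Y :=
  {w | (∀ v ∈ M, w - v ∉ -(interior K)) ∧
       ∀ u : Y, u - w ∈ -(interior K) → ∃ v ∈ M, u - v ∈ -(interior K)}

def epiConj {X Y : Type*} [AddCommGroup X] [Module ℝ X] [TopologicalSpace X]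
    [AddCommGroup Y] [Module ℝ Y] [TopologicalSpace Y]
    (K : Set Y) (H : X → Y) (domH : Set X) : Set ((X →L[ℝ] Y) × Y) :=
  {p | ∃ w ∈ wSupElems K ((fun x => p.1 x - H x) '' domH), p.2 - w ∈ K}

section Aux

variable {Y : Type*} [AddCommGroup Y] [Module ℝ Y] [TopologicalSpace Y]
  [IsTopologicalAddGroup Y] [ContinuousSMul ℝ Y]

lemma aux_addK (K : Set Y) (hKconv : Convex ℝ K)
    (hKcone : ∀ c : ℝ, 0 < c → c • K ⊆ K)
    {a b : Y} (ha : a ∈ K) (hb : b ∈ K) : a + b ∈ K := by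
  have h : (1/2 : ℝ) • a + (1/2 : ℝ) • b ∈ K :=
    hKconv ha hb (by norm_num) (by norm_num) (by norm_num)
  have h2 : (2 : ℝ) • ((1/2 : ℝ) • a + (1/2 : ℝ) • b) ∈ (2:ℝ) • K :=
    smul_mem_smul_set h
  have := hKcone 2 (by norm_num) h2
  have heq : (2 : ℝ) • ((1/2 : ℝ) • a + (1/2 : ℝ) • b) = a + b := by
    rw [smul_add, smul_smul, smul_smul]; norm_num
  rwa [heq] at this

lemma aux_intK_addK (K : Set Y) (hKconv : Convex ℝ K)
    (hKcone : ∀ c : ℝ, 0 < c → c • K ⊆ K)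
    {a b : Y} (ha : a ∈ interior K) (hb : b ∈ K) : a + b ∈ interior K := by
  have hopen : IsOpen ((fun y => y + b) '' interior K) :=
    (isOpenMap_add_right b) _ isOpen_interior
  have hsub : (fun y => y + b) '' interior K ⊆ K := by
    rintro _ ⟨c, hc, rfl⟩
    exact aux_addK K hKconv hKcone (interior_subset hc) hb
  exact interior_maximal hsub hopen ⟨a, ha, rfl⟩

lemma aux_smul_intK (K : Set Y) (hKcone : ∀ c : ℝ, 0 < c → c • K ⊆ K)
    {c : ℝ} (hc : 0 < c) {a : Y} (ha : a ∈ interior K) : c • a ∈ interior K := by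
  have hopen : IsOpen (c • interior K) := (isOpenMap_smul₀ hc.ne') _ isOpen_interior
  have hsub : c • interior K ⊆ K := by
    intro y hy
    exact hKcone c hc (smul_set_mono interior_subset hy)
  exact interior_maximal hsub hopen (smul_mem_smul_set ha)

lemma aux_small (K : Set Y) (z : Y) {a : Y} (ha : a ∈ interior K) :
    ∃ s : ℝ, 0 < s ∧ a - s • z ∈ interior K := by
  have hcont : Continuous fun s : ℝ => a - s • z :=
    continuous_const.sub (continuous_id.smul continuous_const)
  have hopen : IsOpen ((fun s : ℝ => a - s • z) ⁻¹' interior K) :=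
    isOpen_interior.preimage hcont
  have h0 : (0 : ℝ) ∈ (fun s : ℝ => a - s • z) ⁻¹' interior K := by
    simpa using ha
  obtain ⟨ε, hε, hball⟩ := Metric.isOpen_iff.mp hopen 0 h0
  refine ⟨ε/2, by positivity, hball ?_⟩
  rw [Metric.mem_ball, Real.dist_eq, sub_zero, abs_of_pos (by positivity : (0:ℝ) < ε/2)]
  linarith

end Aux

theorem stmt9 {X Y : Type*}
    [AddCommGroup X] [Module ℝ X] [TopologicalSpace X]
    [AddCommGroup Y] [Module ℝ Y] [TopologicalSpace Y] [IsTopologicalAddGroup Y]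
    [ContinuousSMul ℝ Y] [T2Space Y] [LocallyConvexSpace ℝ Y]
    (K : Set Y) (hKcl : IsClosed K) (hKconv : Convex ℝ K)
    (hKcone : ∀ c : ℝ, 0 < c → c • K ⊆ K) (hK0 : (0:Y) ∈ K)
    (hKpointed : K ∩ (-K) ⊆ {0}) (hKint : (interior K).Nonempty)
    (F : X → Y) (domF : Set X) (hFprop : domF.Nonempty) :
    @IsClosed ((X →L[ℝ] Y) × Y)
      (@instTopologicalSpaceProd (X →L[ℝ] Y) Y
      (TopologicalSpace.induced (fun L : X →L[ℝ] Y => (⇑L : X → Y)) Pi.topologicalSpace) _)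
      (epiConj K F domF) := by
  letI : TopologicalSpace (X →L[ℝ] Y) :=
    TopologicalSpace.induced (fun L : X →L[ℝ] Y => (⇑L : X → Y)) Pi.topologicalSpace
  obtain ⟨e, he⟩ := hKint
  have heK : e ∈ K := interior_subset he
  -- characterization of the epigraph of the conjugate
  have hset : epiConj K F domF =
      ⋂ x ∈ domF, {p : (X →L[ℝ] Y) × Y | p.2 - (p.1 x - F x) ∉ -(interior K)} := by
    ext ⟨L, y⟩
    simp only [epiConj, mem_setOf_eq, mem_iInter]
    constructor
    · rintro ⟨w, ⟨hw1, hw2⟩, hyw⟩ x hx hmem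
      refine hw1 (L x - F x) ⟨x, hx, rfl⟩ ?_
      rw [Set.mem_neg] at hmem ⊢
      have h1 : (L x - F x) - y ∈ interior K := by rwa [← neg_sub y (L x - F x)]
      have : ((L x - F x) - y) + (y - w) ∈ interior K :=
        aux_intK_addK K hKconv hKcone h1 hyw
      rwa [show ((L x - F x) - y) + (y - w) = -(w - (L x - F x)) by abel] at this
    · intro hall
      -- the set of "scales" along e
      set S : Set ℝ :=
        {t : ℝ | ∃ x ∈ domF, (y - t • e) - (L x - F x) ∈ -(interior K)} with hS
      have hAopen : IsOpen {u : Y | ∃ x ∈ domF, u - (L x - F x) ∈ -(interior K)} := by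
        have heq : {u : Y | ∃ x ∈ domF, u - (L x - F x) ∈ -(interior K)} =
            ⋃ x ∈ domF, (fun u : Y => u - (L x - F x)) ⁻¹' (-(interior K)) := by
          ext u; simp
        rw [heq]
        exact isOpen_biUnion fun x _ =>
          isOpen_interior.neg.preimage (continuous_id.sub continuous_const)
      have hSopen : IsOpen S := by
        have : S = (fun t : ℝ => y - t • e) ⁻¹'
            {u : Y | ∃ x ∈ domF, u - (L x - F x) ∈ -(interior K)} := rfl
        rw [this]
        exact hAopen.preimage (continuous_const.sub (continuous_id.smul continuous_const))
      -- S is nonempty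
      obtain ⟨x0, hx0⟩ := hFprop
      have hSne : S.Nonempty := by
        obtain ⟨s, hs, hse⟩ := aux_small K (y - (L x0 - F x0)) he
        refine ⟨1/s, x0, hx0, ?_⟩
        rw [Set.mem_neg]
        have h1 : (1/s : ℝ) • (e - s • (y - (L x0 - F x0))) ∈ interior K :=
          aux_smul_intK K hKcone (by positivity) hse
        have heq : (1/s : ℝ) • (e - s • (y - (L x0 - F x0))) =
            -((y - (1/s : ℝ) • e) - (L x0 - F x0)) := by
          rw [smul_sub, smul_smul]
          rw [one_div, inv_mul_cancel₀ hs.ne', one_smul]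
          abel
        rwa [heq] at h1
      -- all elements of S are positive
      have hSpos : ∀ t ∈ S, 0 < t := by
        intro t ht
        by_contra hle
        push_neg at hle
        obtain ⟨x, hx, hv⟩ := ht
        refine hall x hx ?_
        rw [Set.mem_neg] at hv ⊢
        have h1 : (L x - F x) - (y - t • e) ∈ interior K := by
          rwa [← neg_sub (y - t • e) (L x - F x)]
        have hte : (-t) • e ∈ K := by
          rcases eq_or_lt_of_le hle with h | h
          · subst h; simpa using hK0
          · exact hKcone (-t) (by linarith) (smul_mem_smul_set heK)
        have h2 : ((L x - F x) - (y - t • e)) + (-t) • e ∈ interior K :=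
          aux_intK_addK K hKconv hKcone h1 hte
        have heq : ((L x - F x) - (y - t • e)) + (-t) • e = -(y - (L x - F x)) := by
          rw [neg_smul]; abel
        rwa [heq] at h2
      have hSbdd : BddBelow S := ⟨0, fun t ht => (hSpos t ht).le⟩
      set t₀ : ℝ := sInf S with ht₀
      have ht₀nonneg : 0 ≤ t₀ := le_csInf hSne fun t ht => (hSpos t ht).le
      refine ⟨y - t₀ • e, ⟨?_, ?_⟩, ?_⟩
      · -- w - v ∉ -(interior K) for all v in the image
        rintro _ ⟨x, hx, rfl⟩ hmem
        have : t₀ ∈ S := ⟨x, hx, hmem⟩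
        obtain ⟨ε, hε, hball⟩ := Metric.isOpen_iff.mp hSopen t₀ this
        have hmem' : t₀ - ε/2 ∈ S := by
          apply hball
          rw [Metric.mem_ball, Real.dist_eq]
          rw [show t₀ - ε/2 - t₀ = -(ε/2) by ring, abs_neg,
            abs_of_pos (by positivity : (0:ℝ) < ε/2)]
          linarith
        have := csInf_le hSbdd hmem'
        linarith
      · -- weak supremum property
        intro u hu
        rw [Set.mem_neg, neg_sub] at hu
        have hwu : (y - t₀ • e) - u ∈ interior K := hu
        obtain ⟨s, hs, hse⟩ := aux_small K e hwu
        obtain ⟨t, ht, htlt⟩ := exists_lt_of_csInf_lt hSne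
          (show sInf S < t₀ + s by rw [← ht₀]; linarith)
        have htge : t₀ ≤ t := csInf_le hSbdd ht
        obtain ⟨x, hx, hv⟩ := ht
        refine ⟨L x - F x, ⟨x, hx, rfl⟩, ?_⟩
        rw [Set.mem_neg] at hv ⊢
        -- (w - u) - (t - t₀) • e ∈ interior K as a convex combination
        set r : ℝ := (t - t₀) / s with hr
        have hr0 : 0 ≤ r := div_nonneg (by linarith) hs.le
        have hr1 : r ≤ 1 := by
          rw [hr, div_le_one hs]; linarith
        have hcombo : (1 - r) • ((y - t₀ • e) - u) + r • (((y - t₀ • e) - u) - s • e)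
            ∈ interior K :=
          hKconv.interior hwu hse (by linarith) hr0 (by ring)
        have hrs : r * s = t - t₀ := by
          rw [hr, div_mul_cancel₀ _ hs.ne']
        have heq1 : (1 - r) • ((y - t₀ • e) - u) + r • (((y - t₀ • e) - u) - s • e) =
            ((y - t₀ • e) - u) - (t - t₀) • e := by
          rw [← hrs]
          module
        rw [heq1] at hcombo
        have h1 : (L x - F x) - (y - t • e) ∈ interior K := by
          rwa [← neg_sub (y - t • e) (L x - F x)]
        have h2 : ((L x - F x) - (y - t • e)) + (((y - t₀ • e) - u) - (t - t₀) • e)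
            ∈ interior K :=
          aux_intK_addK K hKconv hKcone h1 (interior_subset hcombo)
        have heq2 : ((L x - F x) - (y - t • e)) + (((y - t₀ • e) - u) - (t - t₀) • e) =
            -(u - (L x - F x)) := by
          rw [sub_smul]; abel
        rwa [heq2] at h2
      · -- y - w ∈ K
        have : y - (y - t₀ • e) = t₀ • e := by abel
        rw [this]
        rcases eq_or_lt_of_le ht₀nonneg with h | h
        · simp [← h, hK0]
        · exact hKcone t₀ h (smul_mem_smul_set heK)
  rw [hset]
  refine isClosed_biInter fun x _ => ?_
  have hg : Continuous fun p : (X →L[ℝ] Y) × Y => p.2 - (p.1 x - F x) := by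
    refine continuous_snd.sub (Continuous.sub ?_ continuous_const)
    exact ((continuous_apply x).comp continuous_induced_dom).comp continuous_fst
  exact (isOpen_interior.neg.isClosed_compl).preimage hg
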